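/- If Q is a 2×2 real symmetric positive definite matrix, U a 2×2 real antisymmetric matrix, and W = diag(1, ω) with ω > 0, then T[W] := ‖√W Q⁻¹ U Q⁻¹ √W‖₁ / Tr[W Q⁻¹] equals 2√(ω · det U) / (Q₂₂ + ω Q₁₁), where det U = U₁₂² ≥ 0. -/

import Mathlib

open Matrix

open scoped ComplexOrder in
/-- the positive semidefinite square root, as `Matrix.PosSemidef.sqrt` was defined in the older Mathlib -/
noncomputable def psdSqrtOld {n 𝕜 : Type*} [Fintype n] [RCLike 𝕜] [DecidableEq n]
    {A : Matrix n n 𝕜} (hA : A.PosSemidef) : Matrix n n 𝕜 :=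
  hA.1.eigenvectorUnitary.1 * diagonal ((↑) ∘ (√·) ∘ hA.1.eigenvalues) *
  (star hA.1.eigenvectorUnitary : Matrix n n 𝕜)

open scoped ComplexOrder in
theorem psdSqrtOld_isHermitian {n 𝕜 : Type*} [Fintype n] [RCLike 𝕜] [DecidableEq n]
    {A : Matrix n n 𝕜} (hA : A.PosSemidef) : (psdSqrtOld hA).IsHermitian := by
  unfold psdSqrtOld
  rw [Matrix.star_eq_conjTranspose]
  apply isHermitian_mul_mul_conjTranspose
  apply isHermitian_diagonal_of_self_adjoint
  ext i
  simp

noncomputable def traceNorm {n : ℕ} (A : Matrix (Fin n) (Fin n) ℝ) : ℝ :=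
  (psdSqrtOld (Matrix.posSemidef_conjTranspose_mul_self A)).trace

noncomputable def singVals {n : ℕ} (A : Matrix (Fin n) (Fin n) ℝ) : Fin n → ℝ :=
  (psdSqrtOld_isHermitian (Matrix.posSemidef_conjTranspose_mul_self A)).eigenvalues

noncomputable def opNorm {n : ℕ} (A : Matrix (Fin n) (Fin n) ℝ) : ℝ :=
  ⨆ i, singVals A i

/-- the positive semidefinite square root, extended by `0` off psd matrices -/
noncomputable def mySqrt {n : ℕ} (A : Matrix (Fin n) (Fin n) ℝ) : Matrix (Fin n) (Fin n) ℝ :=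
  open Classical in
  if h : A.PosSemidef then psdSqrtOld h else 0

/-- the weight-dependent incompatibility measure `T[W]` -/
noncomputable def Tmeas {n : ℕ} (W Q U : Matrix (Fin n) (Fin n) ℝ) : ℝ :=
  traceNorm (mySqrt W * Q⁻¹ * U * Q⁻¹ * mySqrt W) / (W * Q⁻¹).trace

/-- the quantumness measure `R` -/
noncomputable def Rmeas {n : ℕ} (Q U : Matrix (Fin n) (Fin n) ℝ) : ℝ :=
  opNorm (mySqrt Q⁻¹ * U * mySqrt Q⁻¹)

open scoped MatrixOrder in
lemma psdSqrtOld_eq_of_sq_eq {n : ℕ} {A B : Matrix (Fin n) (Fin n) ℝ} (hB : B.PosSemidef)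
    (hA : A.PosSemidef) (h : B ^ 2 = A) : B = psdSqrtOld hA := by
  have e : psdSqrtOld hA = CFC.sqrt A := by
    rw [CFC.sqrt_eq_real_sqrt A hA.nonneg, cfcₙ_eq_cfc, hA.1.cfc_eq, IsHermitian.cfc, Unitary.conjStarAlgAut_apply]
    rfl
  rw [e]
  exact (CFC.sqrt_unique (by rw [← h, pow_two]) hB.nonneg).symm

lemma diagPSD {x y : ℝ} (hx : 0 ≤ x) (hy : 0 ≤ y) :
    (!![x, 0; 0, y] : Matrix (Fin 2) (Fin 2) ℝ).PosSemidef := by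
  have h : (!![x, 0; 0, y] : Matrix (Fin 2) (Fin 2) ℝ) = Matrix.diagonal ![x, y] := by
    ext i j; fin_cases i <;> fin_cases j <;> simp [Matrix.diagonal]
  rw [h]
  exact Matrix.PosSemidef.diagonal (by intro i; fin_cases i <;> simpa)

lemma traceNorm_anti (c : ℝ) :
    traceNorm (!![0, c; -c, 0] : Matrix (Fin 2) (Fin 2) ℝ) = 2 * |c| := by
  unfold traceNorm
  have h := Matrix.posSemidef_conjTranspose_mul_self (!![0, c; -c, 0] : Matrix (Fin 2) (Fin 2) ℝ)
  have hs : psdSqrtOld h = !![|c|, 0; 0, |c|] := by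
    refine (psdSqrtOld_eq_of_sq_eq (diagPSD (abs_nonneg c) (abs_nonneg c)) h ?_).symm
    have hAA : (!![0, c; -c, 0] : Matrix (Fin 2) (Fin 2) ℝ)ᴴ * !![0, c; -c, 0]
        = !![c^2, 0; 0, c^2] := by
      ext i j; fin_cases i <;> fin_cases j <;>
        simp [Matrix.mul_apply, Fin.sum_univ_two, Matrix.conjTranspose_apply,
          Matrix.vecHead, Matrix.vecTail] <;> ring
    rw [hAA]
    ext i j; fin_cases i <;> fin_cases j <;>
      simp [pow_two, Matrix.mul_apply, Fin.sum_univ_two, abs_mul_abs_self]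
  rw [hs]
  simp [Matrix.trace_fin_two]
  ring

lemma mySqrt_diag {x y : ℝ} (hx : 0 ≤ x) (hy : 0 ≤ y) :
    mySqrt (!![x, 0; 0, y] : Matrix (Fin 2) (Fin 2) ℝ)
      = !![Real.sqrt x, 0; 0, Real.sqrt y] := by
  rw [mySqrt, dif_pos (diagPSD hx hy)]
  refine (psdSqrtOld_eq_of_sq_eq
    (diagPSD (Real.sqrt_nonneg x) (Real.sqrt_nonneg y)) (diagPSD hx hy) ?_).symm
  ext i j; fin_cases i <;> fin_cases j <;>
    simp [pow_two, Matrix.mul_apply, Fin.sum_univ_two, Real.mul_self_sqrt, hx, hy]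

/-- Explicit form of T[W] for the two-parameter model with W = diag(1, ω). -/
theorem Tmeas_two_param (Q : Matrix (Fin 2) (Fin 2) ℝ) (hQ : Q.PosDef)
    (u ω : ℝ) (hω : 0 < ω) :
    (Matrix.det !![0, u; -u, 0] = u ^ 2) ∧
    Tmeas !![1, 0; 0, ω] Q !![0, u; -u, 0] =
      2 * Real.sqrt (ω * Matrix.det !![0, u; -u, 0]) / (Q 1 1 + ω * Q 0 0) := by
  have hdet : Matrix.det (!![0, u; -u, 0] : Matrix (Fin 2) (Fin 2) ℝ) = u ^ 2 := by
    simp [Matrix.det_fin_two_of]; ring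
  refine ⟨hdet, ?_⟩
  set d := Q.det with hd
  have hdpos : 0 < d := hQ.det_pos
  have hsym : Q 1 0 = Q 0 1 := by simpa using hQ.1.apply 0 1
  have hQinv : Q⁻¹ = !![Q 1 1 / d, -(Q 0 1) / d; -(Q 0 1) / d, Q 0 0 / d] := by
    rw [Matrix.inv_def, Ring.inverse_eq_inv, Matrix.adjugate_fin_two]
    ext i j; fin_cases i <;> fin_cases j <;> simp [hsym] <;> ring
  have hdexp : d = Q 0 0 * Q 1 1 - Q 0 1 ^ 2 := by
    rw [hd, Matrix.det_fin_two, hsym]; ring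
  set s := Real.sqrt ω with hsdef
  have hs : 0 < s := Real.sqrt_pos.mpr hω
  have hW : mySqrt (!![1, 0; 0, ω] : Matrix (Fin 2) (Fin 2) ℝ) = !![1, 0; 0, s] := by
    rw [mySqrt_diag zero_le_one hω.le, Real.sqrt_one]
  have hM : mySqrt !![1, 0; 0, ω] * Q⁻¹ * !![0, u; -u, 0] * Q⁻¹ * mySqrt !![1, 0; 0, ω]
      = !![0, s * u / d; -(s * u / d), 0] := by
    rw [hW, hQinv]
    have hd' : d ≠ 0 := hdpos.ne'
    ext i j
    fin_cases i <;> fin_cases j <;>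
      · simp only [Matrix.mul_apply, Fin.sum_univ_two, Matrix.cons_val', Matrix.cons_val_zero,
          Matrix.cons_val_one, Matrix.head_cons, Matrix.head_fin_const, Matrix.empty_val',
          Matrix.cons_val_fin_one, Matrix.of_apply, Fin.zero_eta, Fin.mk_one]
        rw [hdexp] at hd' ⊢
        have hd'' : Q 1 1 * Q 0 0 - Q 0 1 ^ 2 ≠ 0 := by rw [mul_comm]; exact hd'
        field_simp
        ring
  have htr : (!![1, 0; 0, ω] * Q⁻¹ : Matrix (Fin 2) (Fin 2) ℝ).trace
      = (Q 1 1 + ω * Q 0 0) / d := by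
    rw [hQinv]
    simp [Matrix.trace_fin_two, Matrix.mul_apply, Fin.sum_univ_two,
      Matrix.vecHead, Matrix.vecTail]
    ring
  have hden : 0 < Q 1 1 + ω * Q 0 0 := by
    have h0 : 0 < Q 0 0 := by
      have := hQ.dotProduct_mulVec_pos (x := ![1, 0]) (by intro h; simpa using congrFun h 0)
      simpa [dotProduct, Matrix.mulVec, Fin.sum_univ_two] using this
    have h1 : 0 < Q 1 1 := by
      have := hQ.dotProduct_mulVec_pos (x := ![0, 1]) (by intro h; simpa using congrFun h 1)
      simpa [dotProduct, Matrix.mulVec, Fin.sum_univ_two] using this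
    positivity
  rw [Tmeas, hM, htr, traceNorm_anti, hdet]
  rw [abs_div, abs_of_pos hdpos, abs_mul, abs_of_pos hs,
    Real.sqrt_mul hω.le, Real.sqrt_sq_eq_abs]
  field_simp
  rw [hsdef, mul_comm]
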